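/- Let R be a commutative noetherian ring and let S₁ and S₂ be Serre classes of R-modules. The following are equivalent: (i) the extension class (S₁, S₂) is a Serre class (i.e., it is closed under extensions); (ii) (S₂, S₁) ⊆ (S₁, S₂). -/

import Mathlib

universe u v

/-- The extension class `(S₁, S₂)`: modules `M` admitting a submodule `N ∈ S₁` with `M/N ∈ S₂`. -/
def ExtensionClass {R : Type u} [CommRing R]
    (S₁ S₂ : ∀ (M : Type v) [AddCommGroup M] [Module R M], Prop)
    (M : Type v) [AddCommGroup M] [Module R M] : Prop :=
  ∃ N : Submodule R M, S₁ N ∧ S₂ (M ⧸ N)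

/-- A Serre class of `R`-modules. -/
structure IsSerreClass (R : Type u) [CommRing R]
    (S : ∀ (M : Type v) [AddCommGroup M] [Module R M], Prop) : Prop where
  isoClosed : ∀ (M N : Type v) [AddCommGroup M] [Module R M] [AddCommGroup N] [Module R N],
      (M ≃ₗ[R] N) → S M → S N
  zeroMem : ∀ (M : Type v) [AddCommGroup M] [Module R M], Subsingleton M → S M
  subClosed : ∀ (M : Type v) [AddCommGroup M] [Module R M] (N : Submodule R M), S M → S N
  quotClosed : ∀ (M : Type v) [AddCommGroup M] [Module R M] (N : Submodule R M), S M → S (M ⧸ N)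
  extClosed : ∀ (L M N : Type v) [AddCommGroup L] [Module R L] [AddCommGroup M] [Module R M]
      [AddCommGroup N] [Module R N] (f : L →ₗ[R] M) (g : M →ₗ[R] N),
      Function.Injective f → Function.Surjective g →
      LinearMap.range f = LinearMap.ker g → S L → S N → S M

section Helpers

variable {R : Type u} [CommRing R]
variable {S S₁ S₂ : ∀ (M : Type v) [AddCommGroup M] [Module R M], Prop}

theorem IsSerreClass.of_surj (h : IsSerreClass R S) {M N : Type v} [AddCommGroup M] [Module R M]
    [AddCommGroup N] [Module R N] (f : M →ₗ[R] N) (hf : Function.Surjective f) (hM : S M) :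
    S N :=
  h.isoClosed _ _ (f.quotKerEquivOfSurjective hf) (h.quotClosed M _ hM)

theorem IsSerreClass.of_inj (h : IsSerreClass R S) {M N : Type v} [AddCommGroup M] [Module R M]
    [AddCommGroup N] [Module R N] (f : M →ₗ[R] N) (hf : Function.Injective f) (hN : S N) :
    S M :=
  h.isoClosed _ _ (LinearEquiv.ofInjective f hf).symm (h.subClosed N _ hN)

theorem IsSerreClass.sq (h : IsSerreClass R S) {M : Type v} [AddCommGroup M] [Module R M]
    (P : Submodule R M) (hP : S P) (hQ : S (M ⧸ P)) : S M :=
  h.extClosed P M (M ⧸ P) P.subtype P.mkQ P.injective_subtype P.mkQ_surjective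
    (by rw [Submodule.range_subtype, Submodule.ker_mkQ]) hP hQ

/-- If `P = ker f` and the codomain of `f` is in `S`, then `M ⧸ P ∈ S`. -/
theorem IsSerreClass.quot_of_ker (h : IsSerreClass R S) {M N : Type v} [AddCommGroup M]
    [Module R M] [AddCommGroup N] [Module R N] (f : M →ₗ[R] N) {P : Submodule R M}
    (hP : P = LinearMap.ker f) (hN : S N) : S (M ⧸ P) :=
  h.isoClosed _ _ ((Submodule.quotEquivOfEq _ _ hP).trans f.quotKerEquivRange).symm
    (h.subClosed N _ hN)

theorem ExtensionClass.iso (h₁ : IsSerreClass R S₁) (h₂ : IsSerreClass R S₂)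
    {M N : Type v} [AddCommGroup M] [Module R M] [AddCommGroup N] [Module R N]
    (e : M ≃ₗ[R] N) (hM : ExtensionClass S₁ S₂ M) : ExtensionClass S₁ S₂ N := by
  obtain ⟨P, hP, hQ⟩ := hM
  exact ⟨P.map (e : M →ₗ[R] N),
    h₁.isoClosed _ _ (Submodule.equivMapOfInjective (e : M →ₗ[R] N) e.injective P) hP,
    h₂.isoClosed _ _ (Submodule.Quotient.equiv P _ e rfl) hQ⟩

theorem ExtensionClass.zero (h₁ : IsSerreClass R S₁) (h₂ : IsSerreClass R S₂)
    (M : Type v) [AddCommGroup M] [Module R M] (hM : Subsingleton M) :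
    ExtensionClass S₁ S₂ M := by
  haveI := hM
  exact ⟨⊥, h₁.zeroMem _ inferInstance,
    h₂.zeroMem _ (Submodule.quotEquivOfEqBot ⊥ rfl).toEquiv.subsingleton⟩

theorem ExtensionClass.sub (h₁ : IsSerreClass R S₁) (h₂ : IsSerreClass R S₂)
    {M : Type v} [AddCommGroup M] [Module R M] (P : Submodule R M)
    (hM : ExtensionClass S₁ S₂ M) : ExtensionClass S₁ S₂ P := by
  obtain ⟨N, hN, hQ⟩ := hM
  refine ⟨N.comap P.subtype, ?_, ?_⟩
  · refine h₁.of_inj (LinearMap.codRestrict N (P.subtype ∘ₗ (N.comap P.subtype).subtype)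
      (fun x => x.2)) ?_ hN
    intro a b hab
    have h' := congrArg Subtype.val hab
    exact Subtype.ext (Subtype.ext h')
  · exact h₂.quot_of_ker (N.mkQ ∘ₗ P.subtype)
      (by rw [LinearMap.ker_comp, Submodule.ker_mkQ]) hQ

theorem ExtensionClass.quot (h₁ : IsSerreClass R S₁) (h₂ : IsSerreClass R S₂)
    {M : Type v} [AddCommGroup M] [Module R M] (P : Submodule R M)
    (hM : ExtensionClass S₁ S₂ M) : ExtensionClass S₁ S₂ (M ⧸ P) := by
  obtain ⟨N, hN, hQ⟩ := hM
  refine ⟨N.map P.mkQ, ?_, ?_⟩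
  · refine h₁.of_surj (LinearMap.codRestrict _ (P.mkQ ∘ₗ N.subtype)
      (fun x => Submodule.mem_map_of_mem x.2)) ?_ hN
    rintro ⟨y, hy⟩
    obtain ⟨x, hx, rfl⟩ := hy
    exact ⟨⟨x, hx⟩, rfl⟩
  · have hle : N ≤ LinearMap.ker ((N.map P.mkQ).mkQ ∘ₗ P.mkQ) := by
      intro x hx
      simp only [LinearMap.mem_ker, LinearMap.comp_apply, Submodule.mkQ_apply,
        Submodule.Quotient.mk_eq_zero]
      exact Submodule.mem_map_of_mem hx
    refine h₂.of_surj (N.liftQ ((N.map P.mkQ).mkQ ∘ₗ P.mkQ) hle) ?_ hQ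
    intro y
    obtain ⟨z, rfl⟩ := (N.map P.mkQ).mkQ_surjective y
    obtain ⟨m, rfl⟩ := P.mkQ_surjective z
    exact ⟨N.mkQ m, rfl⟩

theorem ExtensionClass.ext (h₁ : IsSerreClass R S₁) (h₂ : IsSerreClass R S₂)
    (hyp : ∀ (M : Type v) [AddCommGroup M] [Module R M],
        ExtensionClass S₂ S₁ M → ExtensionClass S₁ S₂ M)
    {L M N : Type v} [AddCommGroup L] [Module R L] [AddCommGroup M] [Module R M]
    [AddCommGroup N] [Module R N] (f : L →ₗ[R] M) (g : M →ₗ[R] N)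
    (hf : Function.Injective f) (hg : Function.Surjective g)
    (hfg : LinearMap.range f = LinearMap.ker g)
    (hL : ExtensionClass S₁ S₂ L) (hN : ExtensionClass S₁ S₂ N) :
    ExtensionClass S₁ S₂ M := by
  obtain ⟨A, hA, hLA⟩ := hL
  obtain ⟨B, hB, hNB⟩ := hN
  -- A' := f(A) ⊆ M
  set A' : Submodule R M := A.map f with hA'def
  have hA'S : S₁ A' := h₁.isoClosed _ _ (Submodule.equivMapOfInjective f hf A) hA
  have hA'le : A' ≤ LinearMap.ker g := by
    rw [← hfg]
    rintro x ⟨a, _, rfl⟩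
    exact ⟨a, rfl⟩
  -- induced map ḡ : M⧸A' → N
  set gbar : (M ⧸ A') →ₗ[R] N := A'.liftQ g hA'le with hgbar_def
  have hgbar : Function.Surjective gbar := by
    intro n
    obtain ⟨m, rfl⟩ := hg n
    exact ⟨A'.mkQ m, rfl⟩
  set C : Submodule R (M ⧸ A') := B.comap gbar with hCdef
  -- φ : L⧸A → M⧸A'
  have hAker : A ≤ LinearMap.ker (A'.mkQ ∘ₗ f) := by
    intro a ha
    simp only [LinearMap.mem_ker, LinearMap.comp_apply, Submodule.mkQ_apply,
      Submodule.Quotient.mk_eq_zero]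
    exact Submodule.mem_map_of_mem ha
  set φ : (L ⧸ A) →ₗ[R] (M ⧸ A') := A.liftQ (A'.mkQ ∘ₗ f) hAker with hφdef
  have hkerφ : LinearMap.ker gbar = LinearMap.range φ := by
    rw [hgbar_def, hφdef, Submodule.ker_liftQ, Submodule.range_liftQ, LinearMap.range_comp, hfg]
  have hkerle : LinearMap.ker gbar ≤ C := by
    intro x hx
    simp only [hCdef, Submodule.mem_comap, LinearMap.mem_ker.mp hx]
    exact B.zero_mem
  have hC : ExtensionClass S₂ S₁ C := by
    refine ⟨(LinearMap.ker gbar).comap C.subtype, ?_, ?_⟩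
    · have hr : S₂ (LinearMap.range φ) := h₂.of_surj φ.rangeRestrict φ.surjective_rangeRestrict hLA
      exact h₂.isoClosed _ _
        ((Submodule.comapSubtypeEquivOfLe hkerle).trans (LinearEquiv.ofEq _ _ hkerφ)).symm hr
    · set ψ : C →ₗ[R] B := LinearMap.codRestrict B (gbar ∘ₗ C.subtype) (fun x => x.2) with hψdef
      have hψ : Function.Surjective ψ := by
        intro b
        obtain ⟨x, hx⟩ := hgbar b.1
        have hxC : x ∈ C := by
          simp only [hCdef, Submodule.mem_comap, hx]
          exact b.2
        exact ⟨⟨x, hxC⟩, Subtype.ext hx⟩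
      have hkψ : (LinearMap.ker gbar).comap C.subtype = LinearMap.ker ψ := by
        rw [hψdef]
        exact (LinearMap.ker_comp C.subtype gbar).symm.trans (LinearMap.ker_codRestrict _ _ _).symm
      exact h₁.isoClosed _ _
        ((Submodule.quotEquivOfEq _ _ hkψ).trans (ψ.quotKerEquivOfSurjective hψ)).symm hB
  obtain ⟨D, hD, hCD⟩ := hyp C hC
  set D' : Submodule R (M ⧸ A') := D.map C.subtype with hD'def
  have hD'S : S₁ D' := h₁.isoClosed _ _ (Submodule.equivMapOfInjective C.subtype
    C.injective_subtype D) hD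
  have hD'le : D' ≤ C := Submodule.map_subtype_le C D
  refine ⟨D'.comap A'.mkQ, ?_, ?_⟩
  · -- S₁ of E := preimage of D' in M, via extension 0 → A' → E → D' → 0
    set E : Submodule R M := D'.comap A'.mkQ with hEdef
    have hA'E : ∀ x : M, x ∈ A' → x ∈ E := by
      intro x hx
      simp only [hEdef, Submodule.mem_comap, Submodule.mkQ_apply]
      rw [(Submodule.Quotient.mk_eq_zero A').mpr hx]
      exact D'.zero_mem
    set i : A' →ₗ[R] E := LinearMap.codRestrict E A'.subtype (fun x => hA'E x.1 x.2) with hidef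
    set p : E →ₗ[R] D' := LinearMap.codRestrict D' (A'.mkQ ∘ₗ E.subtype) (fun x => x.2) with hpdef
    have hi : Function.Injective i := by
      intro a b hab
      have h' := congrArg Subtype.val hab
      exact Subtype.ext h'
    have hp : Function.Surjective p := by
      intro d
      obtain ⟨m, hm⟩ := A'.mkQ_surjective d.1
      have hmE : m ∈ E := by
        simp only [hEdef, Submodule.mem_comap, hm]
        exact d.2
      exact ⟨⟨m, hmE⟩, Subtype.ext hm⟩
    have hip : LinearMap.range i = LinearMap.ker p := by
      ext x
      constructor
      · rintro ⟨a, rfl⟩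
        apply Subtype.ext
        simp only [hpdef, hidef, LinearMap.codRestrict_apply, LinearMap.comp_apply,
          Submodule.coe_subtype, Submodule.mkQ_apply, ZeroMemClass.coe_zero]
        exact (Submodule.Quotient.mk_eq_zero A').mpr a.2
      · intro hx
        have hx' : A'.mkQ x.1 = 0 := by
          have := congrArg Subtype.val hx
          exact this
        have hxA' : (x : M) ∈ A' := (Submodule.Quotient.mk_eq_zero A').mp hx'
        exact ⟨⟨x.1, hxA'⟩, Subtype.ext rfl⟩
    exact h₁.extClosed A' E D' i p hi hp hip hA'S hD'S
  · -- S₂ of M ⧸ E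
    have hQ2 : S₂ ((M ⧸ A') ⧸ C) := h₂.quot_of_ker (B.mkQ ∘ₗ gbar)
      (by rw [LinearMap.ker_comp, Submodule.ker_mkQ]) hNB
    have hDle : D ≤ LinearMap.ker (D'.mkQ ∘ₗ C.subtype) := by
      intro d hd
      simp only [LinearMap.mem_ker, LinearMap.comp_apply, Submodule.mkQ_apply,
        Submodule.Quotient.mk_eq_zero]
      exact Submodule.mem_map_of_mem hd
    set u : (C ⧸ D) →ₗ[R] ((M ⧸ A') ⧸ D') := D.liftQ (D'.mkQ ∘ₗ C.subtype) hDle with hudef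
    have hu : Function.Injective u := by
      rw [← LinearMap.ker_eq_bot, hudef, Submodule.ker_liftQ, LinearMap.ker_comp,
        Submodule.ker_mkQ]
      have hcm : Submodule.comap C.subtype D' = D := by
        rw [hD'def, Submodule.comap_map_eq, Submodule.ker_subtype, sup_bot_eq]
      rw [hcm, eq_bot_iff]
      rintro x ⟨d, hd, rfl⟩
      simpa [Submodule.Quotient.mk_eq_zero] using hd
    set v : ((M ⧸ A') ⧸ D') →ₗ[R] ((M ⧸ A') ⧸ C) :=
      D'.liftQ C.mkQ (hD'le.trans (le_of_eq C.ker_mkQ.symm)) with hvdef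
    have hv : Function.Surjective v := by
      intro y
      obtain ⟨z, rfl⟩ := C.mkQ_surjective y
      exact ⟨D'.mkQ z, rfl⟩
    have huv : LinearMap.range u = LinearMap.ker v := by
      rw [hudef, hvdef, Submodule.range_liftQ, Submodule.ker_liftQ, Submodule.ker_mkQ,
        LinearMap.range_comp, Submodule.range_subtype]
    have hS2q : S₂ ((M ⧸ A') ⧸ D') := h₂.extClosed _ _ _ u v hu hv huv hCD hQ2
    exact h₂.quot_of_ker (D'.mkQ ∘ₗ A'.mkQ)
      (by rw [LinearMap.ker_comp, Submodule.ker_mkQ]) hS2q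

end Helpers

/-- The extension class `(S₁, S₂)` is a Serre class if and only if `(S₂, S₁) ⊆ (S₁, S₂)`. -/
theorem extensionClass_isSerreClass_iff
    {R : Type u} [CommRing R] [IsNoetherianRing R]
    (S₁ S₂ : ∀ (M : Type v) [AddCommGroup M] [Module R M], Prop)
    (h₁ : IsSerreClass R S₁) (h₂ : IsSerreClass R S₂) :
    IsSerreClass R (ExtensionClass S₁ S₂) ↔
      (∀ (M : Type v) [AddCommGroup M] [Module R M],
        ExtensionClass S₂ S₁ M → ExtensionClass S₁ S₂ M) := by
  constructor
  · intro hS M _ _ hM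
    obtain ⟨P, hP, hQ⟩ := hM
    refine hS.sq P ⟨⊥, h₁.zeroMem _ inferInstance,
        h₂.isoClosed _ _ (Submodule.quotEquivOfEqBot ⊥ rfl).symm hP⟩
      ⟨⊤, h₁.isoClosed _ _ Submodule.topEquiv.symm hQ,
        h₂.zeroMem _ (Submodule.Quotient.subsingleton_iff.mpr rfl)⟩
  · intro hyp
    exact {
      isoClosed := fun M N _ _ _ _ e hM => ExtensionClass.iso h₁ h₂ e hM
      zeroMem := fun M _ _ hM => ExtensionClass.zero h₁ h₂ M hM
      subClosed := fun M _ _ P hM => ExtensionClass.sub h₁ h₂ P hM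
      quotClosed := fun M _ _ P hM => ExtensionClass.quot h₁ h₂ P hM
      extClosed := fun L M N _ _ _ _ _ _ f g hf hg hfg hL hN =>
        ExtensionClass.ext h₁ h₂ hyp f g hf hg hfg hL hN }
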